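/- Let λ₁,…,λ_d > 0 and ρ > 0, and let γ* > 0 satisfy (ρ² - ½Σᵢλᵢ)γ* - d + ½Σᵢ√(λᵢ²γ*² + 4λᵢγ*) = 0. Then ρ²γ* = Σᵢ 2/(√(λᵢ²γ*² + 4λᵢγ*) + λᵢγ* + 2) ≥ Σᵢ 1/(λᵢγ* + 2) ≥ d/((maxᵢ λᵢ)γ* + 2). -/

import Mathlib

open Finset

theorem rho_sq_gamma_identity {d : ℕ} (l : Fin d → ℝ) (hl : ∀ i, 0 < l i)
    (lmax : ℝ) (hmax : IsGreatest (Set.range l) lmax)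
    (ρ γ : ℝ) (hρ : 0 < ρ) (hγ : 0 < γ)
    (heq : (ρ ^ 2 - (1 / 2) * ∑ i, l i) * γ - d
        + (1 / 2) * ∑ i, Real.sqrt ((l i) ^ 2 * γ ^ 2 + 4 * l i * γ) = 0) :
    ρ ^ 2 * γ = ∑ i, 2 / (Real.sqrt ((l i) ^ 2 * γ ^ 2 + 4 * l i * γ) + l i * γ + 2) ∧
    ρ ^ 2 * γ ≥ ∑ i, 1 / (l i * γ + 2) ∧
    (∑ i, 1 / (l i * γ + 2)) ≥ d / (lmax * γ + 2) := by
  have ha : ∀ i, 0 < l i * γ := fun i => mul_pos (hl i) hγ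
  have hnn : ∀ i : Fin d, 0 ≤ (l i) ^ 2 * γ ^ 2 + 4 * l i * γ := by
    intro i; have := hl i; positivity
  have hsq : ∀ i : Fin d,
      (Real.sqrt ((l i) ^ 2 * γ ^ 2 + 4 * l i * γ)) ^ 2
        = (l i) ^ 2 * γ ^ 2 + 4 * l i * γ := fun i => Real.sq_sqrt (hnn i)
  have hs0 : ∀ i : Fin d, 0 ≤ Real.sqrt ((l i) ^ 2 * γ ^ 2 + 4 * l i * γ) :=
    fun i => Real.sqrt_nonneg _
  have hterm : ∀ i : Fin d,
      2 / (Real.sqrt ((l i) ^ 2 * γ ^ 2 + 4 * l i * γ) + l i * γ + 2)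
        = 1 + (l i * γ - Real.sqrt ((l i) ^ 2 * γ ^ 2 + 4 * l i * γ)) / 2 := by
    intro i
    have hden : 0 < Real.sqrt ((l i) ^ 2 * γ ^ 2 + 4 * l i * γ) + l i * γ + 2 := by
      have := ha i; have := hs0 i; linarith
    rw [eq_comm, eq_div_iff (ne_of_gt hden)]
    nlinarith [hsq i, ha i]
  have h1 : ρ ^ 2 * γ
      = ∑ i, 2 / (Real.sqrt ((l i) ^ 2 * γ ^ 2 + 4 * l i * γ) + l i * γ + 2) := by
    have hsum : ∑ i, (1 + (l i * γ - Real.sqrt ((l i) ^ 2 * γ ^ 2 + 4 * l i * γ)) / 2)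
        = (d : ℝ) + ((∑ i, l i) * γ - ∑ i, Real.sqrt ((l i) ^ 2 * γ ^ 2 + 4 * l i * γ)) / 2 := by
      rw [Finset.sum_add_distrib, Finset.sum_const, Finset.card_univ, Fintype.card_fin,
        ← Finset.sum_div, Finset.sum_sub_distrib, ← Finset.sum_mul]
      push_cast; ring
    calc ρ ^ 2 * γ = (d : ℝ) + ((∑ i, l i) * γ
          - ∑ i, Real.sqrt ((l i) ^ 2 * γ ^ 2 + 4 * l i * γ)) / 2 := by linarith
      _ = ∑ i, (1 + (l i * γ - Real.sqrt ((l i) ^ 2 * γ ^ 2 + 4 * l i * γ)) / 2) := hsum.symm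
      _ = ∑ i, 2 / (Real.sqrt ((l i) ^ 2 * γ ^ 2 + 4 * l i * γ) + l i * γ + 2) := by
          exact Finset.sum_congr rfl (fun i _ => (hterm i).symm)
  have h2 : ρ ^ 2 * γ ≥ ∑ i, 1 / (l i * γ + 2) := by
    rw [h1]
    apply Finset.sum_le_sum
    intro i _
    have hsle : Real.sqrt ((l i) ^ 2 * γ ^ 2 + 4 * l i * γ) ≤ l i * γ + 2 := by
      have h2' : (l i) ^ 2 * γ ^ 2 + 4 * l i * γ ≤ (l i * γ + 2) ^ 2 := by nlinarith [ha i]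
      calc Real.sqrt ((l i) ^ 2 * γ ^ 2 + 4 * l i * γ)
          ≤ Real.sqrt ((l i * γ + 2) ^ 2) := Real.sqrt_le_sqrt h2'
        _ = l i * γ + 2 := Real.sqrt_sq (by linarith [ha i])
    have hd1 : 0 < l i * γ + 2 := by linarith [ha i]
    have hd2 : 0 < Real.sqrt ((l i) ^ 2 * γ ^ 2 + 4 * l i * γ) + l i * γ + 2 := by
      linarith [hs0 i, ha i]
    rw [div_le_div_iff₀ hd1 hd2]
    nlinarith [hs0 i, ha i]
  refine ⟨h1, h2, ?_⟩
  have hlmax : ∀ i, l i ≤ lmax := fun i => hmax.2 ⟨i, rfl⟩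
  obtain ⟨i0, hi0⟩ := hmax.1
  have hlmax0 : 0 < lmax := hi0 ▸ hl i0
  have hdm : 0 < lmax * γ + 2 := by positivity
  calc (d : ℝ) / (lmax * γ + 2) = ∑ _i : Fin d, 1 / (lmax * γ + 2) := by
        rw [Finset.sum_const, Finset.card_univ, Fintype.card_fin]
        rw [nsmul_eq_mul]
        field_simp
    _ ≤ ∑ i, 1 / (l i * γ + 2) := by
        apply Finset.sum_le_sum
        intro i _
        apply one_div_le_one_div_of_le (by linarith [ha i])
        have := hlmax i
        nlinarith [hγ.le]
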